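/- Let k be a commutative ring and G a finite group with |G| a unit of k. Then η_k(G) = β_k(G). -/

import Mathlib

/-- `beta`: see above. -/
noncomputable def beta {A : Type*} [CommRing A] (𝒜 : ℕ → Set A) (B : Subring A) : ℕ∞ :=
  sInf ((↑) '' {n : ℕ | B ≤ Subring.closure {a : A | a ∈ B ∧ ∃ d ≤ n, a ∈ 𝒜 d}})

/-- An `ℕ`-graded commutative `k`-algebra equipped with an action of `G` by
degree-preserving `k`-algebra automorphisms. -/
structure GradedAlgebraWithAction (k : Type) [CommRing k] (G : Type) [Group G] :
    Type 1 where
  carrier : Type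
  [commRing : CommRing carrier]
  [algebra : Algebra k carrier]
  grading : ℕ → Submodule k carrier
  graded : GradedAlgebra grading
  action : G →* (carrier ≃ₐ[k] carrier)
  degPres : ∀ (g : G) (d : ℕ), ∀ a ∈ grading d, action g a ∈ grading d

attribute [instance] GradedAlgebraWithAction.commRing GradedAlgebraWithAction.algebra

namespace GradedAlgebraWithAction

variable {k G : Type} [CommRing k] [Group G] (X : GradedAlgebraWithAction k G)

/-- The invariant subring `A^G`. -/
def inv : Subring X.carrier where
  carrier := {a : X.carrier | ∀ g : G, X.action g a = a}
  mul_mem' := by intro a b ha hb g; rw [map_mul, ha g, hb g]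
  one_mem' := fun g => map_one (X.action g)
  add_mem' := by intro a b ha hb g; rw [map_add, ha g, hb g]
  zero_mem' := fun g => map_zero (X.action g)
  neg_mem' := by intro a ha g; rw [map_neg, ha g]

/-- The invariant subring fixed by a subgroup `H ≤ G`. -/
def invSub (H : Subgroup G) : Subring X.carrier where
  carrier := {a : X.carrier | ∀ g ∈ H, X.action g a = a}
  mul_mem' := by intro a b ha hb g hg; rw [map_mul, ha g hg, hb g hg]
  one_mem' := fun g _ => map_one (X.action g)
  add_mem' := by intro a b ha hb g hg; rw [map_add, ha g hg, hb g hg]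
  zero_mem' := fun g _ => map_zero (X.action g)
  neg_mem' := by intro a ha g hg; rw [map_neg, ha g hg]

/-- `β(A)` of the underlying graded algebra. -/
noncomputable def betaTop : ℕ∞ := beta (fun d => (X.grading d : Set X.carrier)) ⊤

/-- `β(A^G)` for the induced grading on the invariant ring. -/
noncomputable def betaInv : ℕ∞ := beta (fun d => (X.grading d : Set X.carrier)) X.inv

end GradedAlgebraWithAction

/-- `β_k(G)`: the supremum of `β(A^G)` over all `ℕ`-graded commutative `k`-algebras `A`
with an action of `G` by degree-preserving `k`-algebra automorphisms and `β(A) ≤ 1`. -/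
noncomputable def betaRing (k : Type) [CommRing k] (G : Type) [Group G] : ℕ∞ :=
  ⨆ (X : GradedAlgebraWithAction k G) (_ : X.betaTop ≤ 1), X.betaInv

/-- A (not necessarily graded) commutative `k`-algebra equipped with an action of `G`
by `k`-algebra automorphisms. -/
structure AlgebraWithAction (k : Type) [CommRing k] (G : Type) [Group G] : Type 1 where
  carrier : Type
  [commRing : CommRing carrier]
  [algebra : Algebra k carrier]
  action : G →* (carrier ≃ₐ[k] carrier)

attribute [instance] AlgebraWithAction.commRing AlgebraWithAction.algebra

/-- `η_G(m) = inf {d : m ^ d ⊆ ⟨m^G⟩}` for a `G`-invariant ideal `m` of a commutative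
`k`-algebra with `G`-action. -/
noncomputable def etaOf {k G : Type} [CommRing k] [Group G] (X : AlgebraWithAction k G)
    (m : Ideal X.carrier) : ℕ∞ :=
  sInf ((↑) '' {d : ℕ | m ^ d ≤
    Ideal.span {a : X.carrier | a ∈ m ∧ ∀ g : G, X.action g a = a}})

/-- `η_k(G)`: the supremum of `η_G(m)` over all commutative `k`-algebras `A` with an
action of `G` by `k`-algebra automorphisms and all `G`-invariant ideals `m ⊆ A`. -/
noncomputable def etaRing (k : Type) [CommRing k] (G : Type) [Group G] : ℕ∞ :=
  ⨆ (X : AlgebraWithAction k G) (m : Ideal X.carrier)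
    (_ : ∀ (g : G), ∀ a ∈ m, X.action g a ∈ m), etaOf X m


lemma sInf_image_le_iff {T : Set ℕ} {n : ℕ} :
    sInf ((↑) '' T : Set ℕ∞) ≤ (n : ℕ∞) ↔ ∃ m ∈ T, m ≤ n := by
  constructor
  · intro h
    by_contra hc
    push_neg at hc
    have h2 : ((n:ℕ∞) + 1) ≤ sInf ((↑) '' T : Set ℕ∞) := by
      apply le_sInf
      rintro b ⟨m, hm, rfl⟩
      have := hc m hm
      exact_mod_cast this
    have h3 := h2.trans h
    have : (n:ℕ∞) < (n:ℕ∞) + 1 :=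
      (ENat.lt_add_one_iff (by simp)).mpr le_rfl
    exact absurd h3 (not_le.mpr this)
  · rintro ⟨m, hm, hle⟩
    exact le_trans (sInf_le ⟨m, hm, rfl⟩) (by exact_mod_cast hle)

section Conv
variable {k A : Type} [CommRing k] [CommRing A] [Algebra k A]
  (𝒜 : ℕ → Submodule k A) [GradedAlgebra 𝒜]

noncomputable def pr (i : ℕ) (a : A) : A := (DirectSum.decompose 𝒜 a i : A)

lemma pr_add (i : ℕ) (x y : A) : pr 𝒜 i (x + y) = pr 𝒜 i x + pr 𝒜 i y := by
  simp [pr]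

lemma pr_zero (i : ℕ) : pr 𝒜 i (0:A) = 0 := by simp [pr]

lemma pr_neg (i : ℕ) (x : A) : pr 𝒜 i (-x) = - pr 𝒜 i x := by
  have h := pr_add 𝒜 i x (-x)
  rw [add_neg_cancel, pr_zero] at h
  exact eq_neg_of_add_eq_zero_left (by linear_combination h.symm)

lemma pr_mem (i : ℕ) (x : A) : pr 𝒜 i x ∈ 𝒜 i := SetLike.coe_mem _

lemma pr_of_mem_same {x : A} {i : ℕ} (h : x ∈ 𝒜 i) : pr 𝒜 i x = x :=
  DirectSum.decompose_of_mem_same 𝒜 h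

lemma pr_of_mem_ne {x : A} {i j : ℕ} (h : x ∈ 𝒜 i) (hij : i ≠ j) : pr 𝒜 j x = 0 :=
  DirectSum.decompose_of_mem_ne 𝒜 h hij

lemma pr_one : pr 𝒜 0 (1:A) = 1 := pr_of_mem_same 𝒜 (SetLike.one_mem_graded 𝒜)

lemma pr_sum {ι : Type*} (s : Finset ι) (f : ι → A) (i : ℕ) :
    pr 𝒜 i (∑ j ∈ s, f j) = ∑ j ∈ s, pr 𝒜 i (f j) := by
  classical
  induction s using Finset.induction with
  | empty => simp [pr_zero]
  | insert _ _ h ih => rw [Finset.sum_insert h, Finset.sum_insert h, pr_add, ih]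

lemma pr_mul (N : ℕ) (x y : A) :
    pr 𝒜 N (x * y) = ∑ ij ∈ Finset.HasAntidiagonal.antidiagonal N, pr 𝒜 ij.1 x * pr 𝒜 ij.2 y := by
  revert y
  refine DirectSum.Decomposition.inductionOn 𝒜
    (motive := fun x => ∀ y, pr 𝒜 N (x * y) =
      ∑ ij ∈ Finset.HasAntidiagonal.antidiagonal N, pr 𝒜 ij.1 x * pr 𝒜 ij.2 y) ?_ ?_ ?_ x
  · intro y; simp [pr_zero]
  · rintro i₀ ⟨x, hx⟩ y
    simp only
    refine DirectSum.Decomposition.inductionOn 𝒜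
      (motive := fun y => pr 𝒜 N (x * y) =
        ∑ ij ∈ Finset.HasAntidiagonal.antidiagonal N, pr 𝒜 ij.1 x * pr 𝒜 ij.2 y) ?_ ?_ ?_ y
    · simp [pr_zero]
    · rintro j₀ ⟨y, hy⟩
      simp only
      have hxy : x * y ∈ 𝒜 (i₀ + j₀) := SetLike.mul_mem_graded hx hy
      by_cases hN : N = i₀ + j₀
      · subst hN
        rw [pr_of_mem_same 𝒜 hxy]
        rw [Finset.sum_eq_single (i₀, j₀)]
        · rw [pr_of_mem_same 𝒜 hx, pr_of_mem_same 𝒜 hy]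
        · rintro ⟨i, j⟩ hmem hne
          have hij : i + j = i₀ + j₀ := Finset.HasAntidiagonal.mem_antidiagonal.mp hmem
          by_cases hi : i = i₀
          · exfalso; apply hne
            have : j = j₀ := by omega
            simp [hi, this]
          · rw [pr_of_mem_ne 𝒜 hx (fun h => hi h.symm)]
            ring
        · intro hnm
          exact absurd (Finset.HasAntidiagonal.mem_antidiagonal.mpr (rfl : i₀ + j₀ = i₀ + j₀)) hnm
      · rw [pr_of_mem_ne 𝒜 hxy (fun h => hN h.symm)]
        symm
        apply Finset.sum_eq_zero
        rintro ⟨i, j⟩ hmem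
        have hij : i + j = N := Finset.HasAntidiagonal.mem_antidiagonal.mp hmem
        by_cases hi : i = i₀
        · have hj : j ≠ j₀ := by rintro rfl; exact hN (by omega)
          rw [pr_of_mem_ne 𝒜 hy (fun h => hj h.symm)]; ring
        · rw [pr_of_mem_ne 𝒜 hx (fun h => hi h.symm)]; ring
    · intro a b ha hb
      rw [mul_add, pr_add, ha, hb, ← Finset.sum_add_distrib]
      apply Finset.sum_congr rfl
      intro ij _
      rw [pr_add]; ring
  · intro a b ha hb y
    rw [add_mul, pr_add, ha y, hb y, ← Finset.sum_add_distrib]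
    apply Finset.sum_congr rfl
    intro ij _
    rw [pr_add]; ring

end Conv

section Dir1

variable {k G : Type} [CommRing k] [Group G] [Finite G]

theorem dir1 (hunit : IsUnit ((Nat.card G : k)))
    (X : GradedAlgebraWithAction k G) (hX : X.betaTop ≤ 1) :
    X.betaInv ≤ etaRing k G := by
  classical
  haveI := X.graded
  haveI := Fintype.ofFinite G
  set 𝒜 := X.grading with h𝒜def
  set m : Ideal X.carrier := Ideal.span {a : X.carrier | ∃ e, 1 ≤ e ∧ a ∈ X.grading e}
    with hmdef
  set J : Ideal X.carrier :=
    Ideal.span {a : X.carrier | a ∈ m ∧ ∀ g : G, X.action g a = a} with hJdef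
  -- m is G-invariant
  have hminv : ∀ (g : G), ∀ a ∈ m, X.action g a ∈ m := by
    intro g a ha
    refine Submodule.span_induction ?_ ?_ ?_ ?_ ha
    · rintro x ⟨e, he, hx⟩
      exact Ideal.subset_span ⟨e, he, X.degPres g e x hx⟩
    · rw [map_zero]; exact Ideal.zero_mem m
    · intro x y _ _ hx hy; rw [map_add]; exact Ideal.add_mem m hx hy
    · intro c x _ hx
      rw [smul_eq_mul, map_mul]
      exact Ideal.mul_mem_left m _ hx
  have hpowinv : ∀ (p : ℕ) (g : G), ∀ x ∈ m ^ p, X.action g x ∈ m ^ p := by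
    intro p
    induction p with
    | zero =>
      intro g x hx
      simpa using Submodule.mem_top (R := X.carrier) (x := (X.action g) x)
    | succ p IH =>
      intro g x hx
      rw [pow_succ] at hx ⊢
      refine Submodule.mul_induction_on hx ?_ ?_
      · intro y hy z hz
        rw [map_mul]
        exact Ideal.mul_mem_mul (IH g y hy) (hminv g z hz)
      · intro y z hy hz
        rw [map_add]; exact add_mem hy hz
  -- the Reynolds operator
  set Rey : X.carrier → X.carrier :=
    fun a => (((hunit.unit⁻¹ : kˣ) : k)) • ∑ g : G, X.action g a with hReydef
  have hRey_add : ∀ a b, Rey (a + b) = Rey a + Rey b := by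
    intro a b
    simp only [hReydef, map_add, Finset.sum_add_distrib, smul_add]
  have hRey_zero : Rey 0 = 0 := by
    simp only [hReydef, map_zero, Finset.sum_const_zero, smul_zero]
  have hRey_inv : ∀ (h : G) (a : X.carrier), X.action h (Rey a) = Rey a := by
    intro h a
    simp only [hReydef]
    rw [map_smul, map_sum]
    congr 1
    apply Fintype.sum_equiv (Equiv.mulLeft h)
    intro g
    show X.action h (X.action g a) = X.action (h * g) a
    rw [map_mul]
    rfl
  have hRey_fix : ∀ a : X.carrier, (∀ g : G, X.action g a = a) → Rey a = a := by
    intro a ha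
    simp only [hReydef]
    rw [Finset.sum_congr rfl (fun g _ => ha g), Finset.sum_const, Finset.card_univ,
      ← Nat.cast_smul_eq_nsmul k, smul_smul]
    have hcard : ((hunit.unit⁻¹ : kˣ) : k) * ((Fintype.card G : k)) = 1 := by
      rw [← Nat.card_eq_fintype_card]
      exact hunit.val_inv_mul
    rw [hcard, one_smul]
  have hRey_mulr : ∀ x v : X.carrier, (∀ g : G, X.action g v = v) →
      Rey (x * v) = Rey x * v := by
    intro x v hv
    simp only [hReydef]
    rw [smul_mul_assoc]
    congr 1
    rw [Finset.sum_mul]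
    apply Finset.sum_congr rfl
    intro g _
    rw [map_mul, hv g]
  have hRey_mem : ∀ (p : ℕ) (x : X.carrier), x ∈ m ^ p → Rey x ∈ m ^ p := by
    intro p x hx
    simp only [hReydef]
    rw [Algebra.smul_def]
    exact Ideal.mul_mem_left _ _ (Submodule.sum_mem _ fun g _ => hpowinv p g x hx)
  -- equivariance of projections
  have hpr_equiv : ∀ (g : G) (i : ℕ) (x : X.carrier),
      pr 𝒜 i (X.action g x) = X.action g (pr 𝒜 i x) := by
    intro g i x
    conv_lhs => rw [← DirectSum.sum_support_decompose 𝒜 x]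
    rw [map_sum]
    rw [show (∑ j ∈ (DirectSum.decompose 𝒜 x).support,
        X.action g ((DirectSum.decompose 𝒜 x j : X.carrier))) =
        ∑ j ∈ (DirectSum.decompose 𝒜 x).support, X.action g (pr 𝒜 j x) from rfl]
    rw [pr_sum]
    rw [Finset.sum_eq_single i]
    · exact pr_of_mem_same 𝒜 (X.degPres g i _ (pr_mem 𝒜 i x))
    · intro j _ hne
      exact pr_of_mem_ne 𝒜 (X.degPres g j _ (pr_mem 𝒜 j x)) hne
    · intro hnotmem
      have h0 : pr 𝒜 i x = 0 := by
        show ((DirectSum.decompose 𝒜 x) i : X.carrier) = 0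
        rw [DFinsupp.notMem_support_iff.mp hnotmem]
        rfl
      rw [h0, show X.action g (0 : X.carrier) = 0 from map_zero _, pr_zero]
  -- degree-0 component of elements of m vanishes
  have hc0 : ∀ z ∈ m, pr 𝒜 0 z = 0 := by
    intro z hz
    refine Submodule.span_induction ?_ ?_ ?_ ?_ hz
    · rintro x ⟨e, he, hx⟩
      exact pr_of_mem_ne 𝒜 hx (by omega)
    · exact pr_zero 𝒜 0
    · intro x y _ _ hx hy; rw [pr_add, hx, hy, add_zero]
    · intro c x _ hx
      rw [smul_eq_mul, pr_mul, Finset.Nat.antidiagonal_zero, Finset.sum_singleton, hx, mul_zero]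
  -- every degree-e component lies in m^e
  have hfa : ∀ (x : X.carrier) (e : ℕ), pr 𝒜 e x ∈ m ^ e := by
    have hX' : sInf ((↑) '' {n : ℕ | (⊤ : Subring X.carrier) ≤ Subring.closure
        {a : X.carrier | a ∈ (⊤ : Subring X.carrier) ∧
          ∃ d ≤ n, a ∈ (𝒜 d : Set X.carrier)}}) ≤ ((1:ℕ) : ℕ∞) := by
      have := hX
      unfold GradedAlgebraWithAction.betaTop beta at this
      exact_mod_cast this
    obtain ⟨n', hn'mem, hn'le⟩ := sInf_image_le_iff.mp hX'
    have htop : ∀ x : X.carrier, x ∈ Subring.closure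
        {a : X.carrier | a ∈ (⊤ : Subring X.carrier) ∧
          ∃ d ≤ 1, a ∈ (𝒜 d : Set X.carrier)} := by
      intro x
      apply Subring.closure_mono (s := {a : X.carrier | a ∈ (⊤ : Subring X.carrier) ∧
          ∃ d ≤ n', a ∈ (𝒜 d : Set X.carrier)})
      · rintro a ⟨h1, d', hd', hmem⟩
        exact ⟨h1, d', hd'.trans hn'le, hmem⟩
      · exact hn'mem (Subring.mem_top x)
    intro x
    refine Subring.closure_induction ?_ ?_ ?_ ?_ ?_ ?_ (htop x)
    · rintro a ⟨-, d', hd', ha⟩ e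
      by_cases he : e = d'
      · subst he
        rw [pr_of_mem_same 𝒜 ha]
        interval_cases e
        · simp [pow_zero, Ideal.one_eq_top]
        · rw [pow_one]
          exact Ideal.subset_span ⟨1, le_rfl, ha⟩
      · rw [pr_of_mem_ne 𝒜 ha (fun h => he h.symm)]
        exact zero_mem _
    · intro e; rw [pr_zero]; exact zero_mem _
    · intro e
      by_cases he : e = 0
      · subst he
        rw [pr_one]
        simp [pow_zero, Ideal.one_eq_top]
      · rw [pr_of_mem_ne 𝒜 (SetLike.one_mem_graded 𝒜) (fun h => he h.symm)]
        exact zero_mem _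
    · intro x y _ _ hx hy e
      rw [pr_add]; exact add_mem (hx e) (hy e)
    · intro x _ hx e
      rw [pr_neg]; exact neg_mem (hx e)
    · intro x y _ _ hx hy e
      rw [pr_mul]
      apply Submodule.sum_mem
      rintro ⟨i, j⟩ hij
      have hije : i + j = e := Finset.HasAntidiagonal.mem_antidiagonal.mp hij
      have h1 : pr 𝒜 i x * pr 𝒜 j y ∈ m ^ i * m ^ j :=
        Ideal.mul_mem_mul (hx i) (hy j)
      rw [← pow_add] at h1
      rwa [hije] at h1
  -- components below p of elements of m^p vanish
  have hfc : ∀ (p : ℕ) (x : X.carrier), x ∈ m ^ p → ∀ i, i < p → pr 𝒜 i x = 0 := by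
    intro p
    induction p with
    | zero => intro x hx i hi; omega
    | succ p IH =>
      intro x hx
      rw [pow_succ] at hx
      refine Submodule.mul_induction_on hx ?_ ?_
      · intro y hy z hz i hi
        rw [pr_mul]
        apply Finset.sum_eq_zero
        rintro ⟨a, b⟩ hab
        have habi : a + b = i := Finset.HasAntidiagonal.mem_antidiagonal.mp hab
        by_cases hap : a < p
        · rw [IH y hy a hap, zero_mul]
        · have hb : b = 0 := by omega
          rw [hb, hc0 z hz, mul_zero]
      · intro u v hu hv i hi
        rw [pr_add, hu i hi, hv i hi, add_zero]
  -- the key generation statement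
  have key : ∀ d : ℕ, m ^ d ≤ J → X.inv ≤ Subring.closure
      {a : X.carrier | a ∈ X.inv ∧ ∃ e ≤ d, a ∈ (𝒜 e : Set X.carrier)} := by
    intro d hd
    set C := Subring.closure
      {a : X.carrier | a ∈ X.inv ∧ ∃ e ≤ d, a ∈ (𝒜 e : Set X.carrier)} with hCdef
    have main : ∀ (e : ℕ) (a : X.carrier), a ∈ X.inv → a ∈ 𝒜 e → a ∈ C := by
      intro e
      induction e using Nat.strong_induction_on with
      | _ e IH =>
      intro a ha hae
      by_cases hed : e ≤ d
      · exact Subring.subset_closure ⟨ha, e, hed, hae⟩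
      · push_neg at hed
        have ham : a ∈ m ^ e := by
          rw [← pr_of_mem_same 𝒜 hae]; exact hfa a e
        have hsub : m ^ e ≤ m ^ (e - d) * J := by
          have heq : m ^ e = m ^ (e - d) * m ^ d := by
            rw [← pow_add]; congr 1; omega
          rw [heq]; exact Ideal.mul_mono_right hd
        have haJ : a ∈ m ^ (e - d) * J := hsub ham
        have base : ∀ q ∈ J, ∀ p ∈ m ^ (e - d), pr 𝒜 e (Rey (p * q)) ∈ C := by
          intro q hq
          refine Submodule.span_induction ?_ ?_ ?_ ?_ hq
          · rintro t ⟨htm, htinv⟩ p hp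
            rw [hRey_mulr p t htinv, pr_mul]
            apply sum_mem
            rintro ⟨i, j⟩ hij
            have hije : i + j = e := Finset.HasAntidiagonal.mem_antidiagonal.mp hij
            by_cases hj0 : j = 0
            · rw [hj0, hc0 t htm, mul_zero]; exact zero_mem C
            · by_cases hilt : i < e - d
              · rw [hfc (e - d) (Rey p) (hRey_mem _ p hp) i hilt, zero_mul]
                exact zero_mem C
              · push_neg at hilt
                have hjd : j ≤ d := by omega
                have hie : i < e := by omega
                apply mul_mem
                · apply IH i hie
                  · intro g
                    rw [← hpr_equiv g i (Rey p), hRey_inv g p]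
                  · exact pr_mem 𝒜 i (Rey p)
                · exact Subring.subset_closure
                    ⟨fun g => by rw [← hpr_equiv g j t, htinv g], j, hjd, pr_mem 𝒜 j t⟩
          · intro p _
            rw [mul_zero, hRey_zero, pr_zero]; exact zero_mem C
          · intro y z _ _ hy hz p hp
            rw [mul_add, hRey_add, pr_add]
            exact add_mem (hy p hp) (hz p hp)
          · intro c y _ hy p hp
            have heq : p * (c • y) = (p * c) * y := by
              rw [smul_eq_mul]; ring
            rw [heq]
            exact hy (p * c) (Ideal.mul_mem_right c _ hp)
        have claim : pr 𝒜 e (Rey a) ∈ C := by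
          refine Submodule.mul_induction_on haJ (fun p hp q hq => base q hq p hp) ?_
          intro y z hy hz
          rw [hRey_add, pr_add]
          exact add_mem hy hz
        have : a = pr 𝒜 e (Rey a) := by
          rw [hRey_fix a (fun g => ha g), pr_of_mem_same 𝒜 hae]
        rw [this]
        exact claim
    intro a ha
    rw [← DirectSum.sum_support_decompose 𝒜 a]
    apply sum_mem
    intro i _
    refine main i _ ?_ (pr_mem 𝒜 i a)
    intro g
    show X.action g (pr 𝒜 i a) = pr 𝒜 i a
    rw [← hpr_equiv g i a]
    rw [show X.action g a = a from ha g]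
  -- assemble
  let Y : AlgebraWithAction k G := ⟨X.carrier, X.action⟩
  have step1 : X.betaInv ≤ etaOf Y m := by
    unfold etaOf
    apply le_sInf
    rintro b ⟨dd, hdd, rfl⟩
    unfold GradedAlgebraWithAction.betaInv beta
    apply sInf_le
    refine ⟨dd, ?_, rfl⟩
    exact key dd hdd
  have step2 : etaOf Y m ≤ etaRing k G := by
    unfold etaRing
    calc etaOf Y m ≤ ⨆ (_ : ∀ (g : G), ∀ a ∈ m, Y.action g a ∈ m), etaOf Y m :=
          le_iSup (fun _ => etaOf Y m) hminv
      _ ≤ ⨆ (m' : Ideal Y.carrier) (_ : ∀ (g : G), ∀ a ∈ m', Y.action g a ∈ m'),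
            etaOf Y m' :=
          le_iSup (fun m' => ⨆ (_ : ∀ (g : G), ∀ a ∈ m', Y.action g a ∈ m'), etaOf Y m') m
      _ ≤ _ := le_iSup (fun X' => ⨆ (m' : Ideal X'.carrier)
            (_ : ∀ (g : G), ∀ a ∈ m', X'.action g a ∈ m'), etaOf X' m') Y
  exact step1.trans step2

end Dir1

section Dir2

variable {k G : Type} [CommRing k] [Group G]

/-- The algebra automorphism of the polynomial ring induced by left translation. -/
noncomputable def act2 (n : ℕ) (g : G) :
    MvPolynomial (Option (Fin n) × G) k ≃ₐ[k] MvPolynomial (Option (Fin n) × G) k :=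
  MvPolynomial.renameEquiv k (Equiv.prodCongr (Equiv.refl (Option (Fin n))) (Equiv.mulLeft g))

lemma act2_apply (n : ℕ) (g : G) (p : MvPolynomial (Option (Fin n) × G) k) :
    act2 n g p = MvPolynomial.rename
      (fun v : Option (Fin n) × G => (v.1, g * v.2)) p := by
  rfl

/-- The translation action of `G` on the polynomial ring. -/
noncomputable def rho2 (n : ℕ) : G →*
    (MvPolynomial (Option (Fin n) × G) k ≃ₐ[k] MvPolynomial (Option (Fin n) × G) k) where
  toFun := act2 n
  map_one' := by
    apply AlgEquiv.ext
    intro p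
    show act2 n (1:G) p = p
    rw [act2_apply]
    rw [show (fun v : Option (Fin n) × G => (v.1, (1:G) * v.2)) = id from
      funext fun v => by simp]
    exact MvPolynomial.rename_id_apply p
  map_mul' := by
    intro g g'
    apply AlgEquiv.ext
    intro p
    show act2 n (g * g') p = act2 n g (act2 n g' p)
    rw [act2_apply, act2_apply, act2_apply, MvPolynomial.rename_rename]
    rw [show ((fun v : Option (Fin n) × G => (v.1, g * v.2)) ∘
        (fun v : Option (Fin n) × G => (v.1, g' * v.2)))
        = (fun v : Option (Fin n) × G => (v.1, g * g' * v.2)) from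
      funext fun v => by simp [mul_assoc]]

/-- The universal graded algebra with `G`-action used in the proof. -/
noncomputable def P2 (k G : Type) [CommRing k] [Group G] (n : ℕ) :
    GradedAlgebraWithAction k G where
  carrier := MvPolynomial (Option (Fin n) × G) k
  grading := MvPolynomial.homogeneousSubmodule (Option (Fin n) × G) k
  graded := MvPolynomial.gradedAlgebra
  action := rho2 n
  degPres := by
    intro g d a ha
    rw [MvPolynomial.mem_homogeneousSubmodule] at ha ⊢
    show MvPolynomial.IsHomogeneous (act2 n g a) d
    rw [act2_apply]
    exact ha.rename_isHomogeneous

lemma P2_betaTop_le (n : ℕ) : (P2 k G n).betaTop ≤ 1 := by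
  unfold GradedAlgebraWithAction.betaTop beta
  have h1 : ((1:ℕ) : ℕ∞) = (1 : ℕ∞) := by norm_num
  rw [← h1]
  apply sInf_le
  refine ⟨1, ?_, rfl⟩
  show (⊤ : Subring (P2 k G n).carrier) ≤ _
  intro p hp
  clear hp
  show p ∈ Subring.closure _
  induction p using MvPolynomial.induction_on with
  | C c =>
    apply Subring.subset_closure
    refine ⟨Subring.mem_top _, 0, by norm_num, ?_⟩
    show MvPolynomial.C c ∈ MvPolynomial.homogeneousSubmodule (Option (Fin n) × G) k 0
    rw [MvPolynomial.mem_homogeneousSubmodule]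
    exact MvPolynomial.isHomogeneous_C _ _
  | add p q hp hq => exact add_mem hp hq
  | mul_X p v hp =>
    refine mul_mem hp (Subring.subset_closure ⟨Subring.mem_top _, 1, le_rfl, ?_⟩)
    show MvPolynomial.X v ∈ MvPolynomial.homogeneousSubmodule (Option (Fin n) × G) k 1
    rw [MvPolynomial.mem_homogeneousSubmodule]
    exact MvPolynomial.isHomogeneous_X _ _

/-- Evaluation sending each variable to `C (u v) * X` of a homogeneous polynomial. -/
lemma aeval_CX_of_isHomogeneous {S σ : Type} [CommRing S] [Algebra k S]
    (u : σ → S) (q : MvPolynomial σ k) (f₀ : ℕ) (hq : q.IsHomogeneous f₀) :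
    MvPolynomial.aeval (fun v => Polynomial.C (u v) * Polynomial.X : σ → Polynomial S) q
      = Polynomial.C (MvPolynomial.aeval u q) * Polynomial.X ^ f₀ := by
  conv_lhs => rw [← q.support_sum_monomial_coeff]
  conv_rhs => rw [← q.support_sum_monomial_coeff]
  rw [map_sum, map_sum, map_sum, Finset.sum_mul]
  apply Finset.sum_congr rfl
  intro μ hμ
  have hdeg : (μ.sum fun _ e => e) = f₀ := by
    have := hq (MvPolynomial.mem_support_iff.mp hμ)
    simpa [Finsupp.weight_apply, Finsupp.sum] using this
  rw [MvPolynomial.aeval_monomial, MvPolynomial.aeval_monomial]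
  have hprod : (μ.prod fun v e => (Polynomial.C (u v) * Polynomial.X) ^ e)
      = Polynomial.C (μ.prod fun v e => u v ^ e) * Polynomial.X ^ f₀ := by
    rw [← hdeg]
    rw [Finsupp.prod, Finsupp.prod, Finsupp.sum]
    simp_rw [mul_pow, ← Polynomial.C_pow]
    rw [Finset.prod_mul_distrib, ← map_prod, Finset.prod_pow_eq_pow_sum]
  rw [hprod, Polynomial.algebraMap_apply, map_mul]
  ring

lemma polcoeff_one_mul {R : Type*} [CommRing R] (p q : Polynomial R) :
    (p * q).coeff 1 = p.coeff 0 * q.coeff 1 + p.coeff 1 * q.coeff 0 := by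
  rw [Polynomial.coeff_mul]
  rw [show (1:ℕ) = 0 + 1 from rfl, Finset.Nat.sum_antidiagonal_succ,
    Finset.Nat.antidiagonal_zero, Finset.sum_singleton]

theorem dir2 [Finite G] (X : AlgebraWithAction k G) (m : Ideal X.carrier)
    (hm : ∀ (g : G), ∀ a ∈ m, X.action g a ∈ m) :
    etaOf X m ≤ betaRing k G := by
  classical
  haveI := Fintype.ofFinite G
  by_cases hbt : betaRing k G = ⊤
  · rw [hbt]; exact le_top
  obtain ⟨n, hn0⟩ := WithTop.ne_top_iff_exists.mp hbt
  have hn : ((n:ℕ) : ℕ∞) = betaRing k G := by exact_mod_cast hn0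
  rw [← hn]
  unfold etaOf
  apply sInf_le
  refine ⟨n, ?_, rfl⟩
  show m ^ n ≤ Ideal.span {a : X.carrier | a ∈ m ∧ ∀ g : G, X.action g a = a}
  set J := Ideal.span {a : X.carrier | a ∈ m ∧ ∀ g : G, X.action g a = a} with hJdef
  rw [Submodule.pow_eq_span_pow_set, Submodule.span_le]
  rintro a ha
  obtain ⟨f, hfa⟩ := Set.mem_pow.mp ha
  rw [List.prod_ofFn] at hfa
  set v : Fin n → X.carrier := fun i => (f i : X.carrier) with hvdef
  have hv : ∀ i, v i ∈ m := fun i => (f i).2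
  show a ∈ J
  -- the universal graded algebra
  set Y := P2 k G n with hYdef
  have hYb : Y.betaInv ≤ ((n:ℕ) : ℕ∞) := by
    rw [hn]
    calc Y.betaInv ≤ ⨆ (_ : Y.betaTop ≤ 1), Y.betaInv :=
        le_iSup (fun _ : Y.betaTop ≤ 1 => Y.betaInv) (P2_betaTop_le n)
      _ ≤ betaRing k G :=
        le_iSup (fun X' : GradedAlgebraWithAction k G =>
          ⨆ (_ : X'.betaTop ≤ 1), X'.betaInv) Y
  have hYb' : sInf ((↑) '' {n' : ℕ | Y.inv ≤ Subring.closure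
      {q : Y.carrier | q ∈ Y.inv ∧ ∃ d ≤ n', q ∈ (Y.grading d : Set Y.carrier)}})
      ≤ ((n:ℕ) : ℕ∞) := by
    have h := hYb
    unfold GradedAlgebraWithAction.betaInv beta at h
    exact_mod_cast h
  obtain ⟨n', hn'mem, hn'le⟩ := sInf_image_le_iff.mp hYb'
  have hcl : Y.inv ≤ Subring.closure
      {q : Y.carrier | q ∈ Y.inv ∧ ∃ d ≤ n, q ∈ (Y.grading d : Set Y.carrier)} := by
    refine le_trans hn'mem (Subring.closure_mono ?_)
    rintro q ⟨h1, d, hd, h2⟩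
    exact ⟨h1, d, hd.trans hn'le, h2⟩
  -- evaluation maps
  set φv : Option (Fin n) × G → X.carrier :=
    fun w => w.1.elim 0 (fun i => X.action w.2 (v i)) with hφvdef
  set wv : Option (Fin n) × G → Polynomial X.carrier :=
    fun w => w.1.elim (if w.2 = 1 then Polynomial.X else 0)
      (fun i => Polynomial.C (X.action w.2 (v i))) with hwvdef
  set Θ : MvPolynomial (Option (Fin n) × G) k →ₐ[k] Polynomial (Polynomial X.carrier) :=
    MvPolynomial.aeval (fun w => Polynomial.C (wv w) * Polynomial.X) with hΘdef
  set Λ : MvPolynomial (Option (Fin n) × G) k →ₐ[k] Polynomial X.carrier :=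
    MvPolynomial.aeval wv with hΛdef
  set φ : MvPolynomial (Option (Fin n) × G) k →ₐ[k] X.carrier :=
    MvPolynomial.aeval φv with hφdef
  have hw0 : ∀ w, Polynomial.constantCoeff (wv w) = φv w := by
    rintro ⟨o, g⟩
    cases o with
    | none =>
      show Polynomial.constantCoeff (if g = 1 then Polynomial.X else 0) = 0
      by_cases hg : g = 1 <;> simp [hg]
    | some i => simp [hwvdef, hφvdef]
  have hLam0 : ∀ q, Polynomial.constantCoeff (Λ q) = φ q := by
    have hcc : (Polynomial.constantCoeff (R := X.carrier)).comp
        ((MvPolynomial.aeval (R := k) wv).toRingHom) = (MvPolynomial.aeval (R := k) φv).toRingHom := by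
      apply MvPolynomial.ringHom_ext
      · intro c
        simp [Polynomial.algebraMap_apply]
      · intro w
        simp [hw0 w]
    intro q
    exact RingHom.congr_fun hcc q
  have hφequiv : ∀ (g : G) (q : MvPolynomial (Option (Fin n) × G) k),
      φ (act2 n g q) = X.action g (φ q) := by
    intro g q
    rw [act2_apply, MvPolynomial.aeval_rename]
    have h2 : ∀ p : MvPolynomial (Option (Fin n) × G) k,
        X.action g (MvPolynomial.aeval φv p)
          = MvPolynomial.aeval (fun w => X.action g (φv w)) p := by
      intro p
      induction p using MvPolynomial.induction_on with
      | C c => simp only [MvPolynomial.aeval_C, AlgEquiv.commutes]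
      | add p q hp hq => rw [map_add, map_add, map_add, hp, hq]
      | mul_X p w hp => rw [map_mul, map_mul, map_mul, hp, MvPolynomial.aeval_X,
          MvPolynomial.aeval_X]
    have hfun : (φv ∘ fun w : Option (Fin n) × G => (w.1, g * w.2))
        = (fun w => X.action g (φv w)) := by
      funext w
      rcases w with ⟨o, h⟩
      cases o with
      | none => show (0:X.carrier) = X.action g 0; rw [map_zero]
      | some i =>
        show X.action (g * h) (v i) = X.action g (X.action h (v i))
        rw [map_mul]
        rfl
    rw [show X.action g (φ q) = X.action g (MvPolynomial.aeval φv q) from rfl, h2 q, hfun]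
  have hφmem : ∀ (f₀ : ℕ), 1 ≤ f₀ → ∀ q : MvPolynomial (Option (Fin n) × G) k,
      q.IsHomogeneous f₀ → φ q ∈ m := by
    intro f₀ hf₀ q hq
    rw [show φ q = MvPolynomial.aeval φv q from rfl, ← q.support_sum_monomial_coeff, map_sum]
    apply Submodule.sum_mem
    intro μ hμ
    rw [MvPolynomial.aeval_monomial]
    have hdeg : (μ.sum fun _ e => e) = f₀ := by
      simpa [Finsupp.weight_apply, Finsupp.sum] using hq (MvPolynomial.mem_support_iff.mp hμ)
    have hne : μ.support.Nonempty := by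
      by_contra hcon
      rw [Finset.not_nonempty_iff_eq_empty] at hcon
      have h0 : μ = 0 := Finsupp.support_eq_empty.mp hcon
      rw [h0] at hdeg
      simp [Finsupp.sum_zero_index] at hdeg
      omega
    obtain ⟨w, hw⟩ := hne
    have hprodmem : (μ.prod fun w' e => φv w' ^ e) ∈ m := by
      rw [Finsupp.prod, ← Finset.mul_prod_erase _ _ hw]
      apply Ideal.mul_mem_right
      have hbase : φv w ∈ m := by
        rcases w with ⟨o, g⟩
        cases o with
        | none => exact zero_mem m
        | some i => exact hm g _ (hv i)
      exact Ideal.pow_mem_of_mem m hbase _ (Nat.pos_of_ne_zero (Finsupp.mem_support_iff.mp hw))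
    exact Ideal.mul_mem_left _ _ hprodmem
  -- the invariant element W
  set Z : MvPolynomial (Option (Fin n) × G) k :=
    ∏ i : Fin n, MvPolynomial.X (some i, (1:G)) with hZdef
  set W : MvPolynomial (Option (Fin n) × G) k :=
    ∑ g : G, Y.action g (Z * MvPolynomial.X (none, (1:G))) with hWdef
  have hWinv : W ∈ Y.inv := by
    intro h
    show Y.action h W = W
    rw [hWdef]; erw [map_sum]
    apply Fintype.sum_equiv (Equiv.mulLeft h)
    intro g
    show Y.action h (Y.action g _) = Y.action (h * g) _
    rw [map_mul Y.action h g]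
    rfl
  have hWcl : W ∈ Subring.closure
      {q : Y.carrier | q ∈ Y.inv ∧ ∃ d ≤ n, q ∈ (Y.grading d : Set Y.carrier)} :=
    hcl hWinv
  -- main closure induction
  have hMain : (∀ fdeg, 1 ≤ fdeg → ((Θ W).coeff fdeg).coeff 0 ∈ J) ∧
      (∀ N, n < N → ((Θ W).coeff N).coeff 1 ∈ J) := by
    clear hWinv hWdef hfa
    refine Subring.closure_induction ?_ ?_ ?_ ?_ ?_ ?_ hWcl
    · rintro q ⟨hqinv, f₀, hf₀n, hqh⟩
      have hqH : MvPolynomial.IsHomogeneous q f₀ := hqh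
      have hΘq : Θ q = Polynomial.C (Λ q) * Polynomial.X ^ f₀ :=
        aeval_CX_of_isHomogeneous wv q f₀ hqH
      constructor
      · intro fdeg hfdeg
        rw [hΘq, Polynomial.coeff_C_mul, Polynomial.coeff_X_pow]
        by_cases hfd : fdeg = f₀
        · rw [if_pos hfd, mul_one]
          have hval : (Λ q).coeff 0 = φ q := hLam0 q
          rw [show (Λ q).coeff 0 = Polynomial.constantCoeff (Λ q) from rfl, hLam0 q]
          apply Ideal.subset_span
          refine ⟨hφmem f₀ (hfd ▸ hfdeg) q hqH, ?_⟩
          intro g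
          rw [← hφequiv g q]
          congr 1
          exact hqinv g
        · rw [if_neg hfd, mul_zero, Polynomial.coeff_zero]
          exact zero_mem J
      · intro N hN
        have hne : N ≠ f₀ := by omega
        rw [hΘq, Polynomial.coeff_C_mul, Polynomial.coeff_X_pow, if_neg hne, mul_zero,
          Polynomial.coeff_zero]
        exact zero_mem J
    · constructor
      · intro fdeg _
        rw [map_zero]
        simp only [Polynomial.coeff_zero]
        exact zero_mem J
      · intro N _
        rw [map_zero]
        simp only [Polynomial.coeff_zero]
        exact zero_mem J
    · constructor
      · intro fdeg hfdeg
        rw [map_one, Polynomial.coeff_one, if_neg (by omega : ¬ fdeg = 0)]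
        simp only [Polynomial.coeff_zero]
        exact zero_mem J
      · intro N hN
        rw [map_one, Polynomial.coeff_one, if_neg (by omega : ¬ N = 0)]
        simp only [Polynomial.coeff_zero]
        exact zero_mem J
    · rintro x y _ _ ⟨hx0, hx1⟩ ⟨hy0, hy1⟩
      constructor
      · intro fdeg hfdeg
        rw [map_add, Polynomial.coeff_add, Polynomial.coeff_add]
        exact add_mem (hx0 fdeg hfdeg) (hy0 fdeg hfdeg)
      · intro N hN
        rw [map_add, Polynomial.coeff_add, Polynomial.coeff_add]
        exact add_mem (hx1 N hN) (hy1 N hN)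
    · rintro x _ ⟨hx0, hx1⟩
      constructor
      · intro fdeg hfdeg
        erw [map_neg]; rw [Polynomial.coeff_neg, Polynomial.coeff_neg]
        exact neg_mem (hx0 fdeg hfdeg)
      · intro N hN
        erw [map_neg]; rw [Polynomial.coeff_neg, Polynomial.coeff_neg]
        exact neg_mem (hx1 N hN)
    · rintro x y _ _ ⟨hx0, hx1⟩ ⟨hy0, hy1⟩
      constructor
      · intro fdeg hfdeg
        rw [map_mul, Polynomial.coeff_mul, Polynomial.finset_sum_coeff]
        apply Submodule.sum_mem
        rintro ⟨i, j⟩ hij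
        have hije : i + j = fdeg := Finset.HasAntidiagonal.mem_antidiagonal.mp hij
        rw [Polynomial.mul_coeff_zero]
        by_cases hi : 1 ≤ i
        · exact Ideal.mul_mem_right _ _ (hx0 i hi)
        · have hj : 1 ≤ j := by omega
          exact Ideal.mul_mem_left _ _ (hy0 j hj)
      · intro N hN
        rw [map_mul, Polynomial.coeff_mul, Polynomial.finset_sum_coeff]
        apply Submodule.sum_mem
        rintro ⟨i, j⟩ hij
        have hije : i + j = N := Finset.HasAntidiagonal.mem_antidiagonal.mp hij
        rw [polcoeff_one_mul]
        apply add_mem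
        · by_cases hi : 1 ≤ i
          · exact Ideal.mul_mem_right _ _ (hx0 i hi)
          · exact Ideal.mul_mem_left _ _ (hy1 j (by omega))
        · by_cases hj : 1 ≤ j
          · exact Ideal.mul_mem_left _ _ (hy0 j hj)
          · exact Ideal.mul_mem_right _ _ (hx1 i (by omega))
  -- computation of Θ W
  have hΘu : ∀ g : G, Θ (MvPolynomial.X ((none, g) : Option (Fin n) × G))
      = if g = 1 then Polynomial.C Polynomial.X * Polynomial.X else 0 := by
    intro g
    rw [show Θ (MvPolynomial.X ((none, g) : Option (Fin n) × G))
      = Polynomial.C (wv (none, g)) * Polynomial.X from MvPolynomial.aeval_X _ _]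
    by_cases hg : g = 1 <;> simp [hwvdef, hg]
  have hΘW : Θ W = Polynomial.C (Polynomial.C a * Polynomial.X)
      * Polynomial.X ^ (n + 1) := by
    rw [hWdef]; erw [map_sum]
    rw [Finset.sum_eq_single (1:G)]
    · rw [show Y.action (1:G) (Z * MvPolynomial.X (none, (1:G)))
          = Z * MvPolynomial.X (none, (1:G)) from by rw [map_one]; rfl]
      erw [map_mul Θ]; rw [hΘu 1, if_pos rfl]
      have hΘZ : Θ Z = Polynomial.C (Polynomial.C a) * Polynomial.X ^ n := by
        rw [hZdef, map_prod]
        have hXi : ∀ i : Fin n,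
            Θ (MvPolynomial.X ((some i, (1:G)) : Option (Fin n) × G))
            = Polynomial.C (Polynomial.C (v i)) * Polynomial.X := by
          intro i
          rw [show Θ (MvPolynomial.X ((some i, (1:G)) : Option (Fin n) × G))
            = Polynomial.C (wv (some i, 1)) * Polynomial.X from MvPolynomial.aeval_X _ _]
          have hone : X.action (1:G) (v i) = v i := by rw [map_one]; rfl
          rw [show wv (some i, 1) = Polynomial.C (v i) from by
            show Polynomial.C (X.action (1:G) (v i)) = _
            rw [hone]]
        rw [Finset.prod_congr rfl (fun i _ => hXi i), Finset.prod_mul_distrib,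
          ← map_prod, ← map_prod, Finset.prod_const, Finset.card_univ, Fintype.card_fin,
          hfa]
      rw [hΘZ, Polynomial.C_mul]
      ring
    · intro g _ hg
      erw [map_mul (Y.action g)]
      have hren : Y.action g (MvPolynomial.X ((none, (1:G)) : Option (Fin n) × G))
          = MvPolynomial.X ((none, g) : Option (Fin n) × G) := by
        show act2 n g _ = _
        rw [act2_apply, MvPolynomial.rename_X]
        congr 2
        exact mul_one g
      rw [hren]; erw [map_mul Θ]; rw [hΘu g, if_neg hg, mul_zero]
    · intro h1
      exact absurd (Finset.mem_univ (1:G)) h1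
  have hfinal : ((Θ W).coeff (n+1)).coeff 1 = a := by
    rw [hΘW, Polynomial.coeff_C_mul, Polynomial.coeff_X_pow, if_pos rfl, mul_one,
      Polynomial.coeff_C_mul, Polynomial.coeff_X_one, mul_one]
  exact hfinal ▸ hMain.2 (n+1) (by omega)

end Dir2

/-- For every finite group `G` and commutative ring `k` with `|G|`
a unit of `k` one has `η_k(G) = β_k(G)`. -/
theorem etaRing_eq_betaRing (k G : Type) [CommRing k] [Group G] [Finite G]
    (hunit : IsUnit ((Nat.card G : k))) :
    etaRing k G = betaRing k G := by
  apply le_antisymm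
  · unfold etaRing
    apply iSup_le; intro X
    apply iSup_le; intro m
    apply iSup_le; intro hm
    exact dir2 X m hm
  · unfold betaRing
    apply iSup_le; intro X
    apply iSup_le; intro hX
    exact dir1 hunit X hX
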